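/- In the hyperboloid model of H³, let O be a horosphere dual to u ∈ L³₊ (the future light cone), meaning O = {v ∈ H³ : ⟨v,u⟩ = −1}, and let H be a totally geodesic plane with O ∩ H = ∅. Let w be the unit space-like dual vector of the half-space bounded by H containing O. Then exp d(O, H) = −⟨u, w⟩. -/

import Mathlib

/-- The Lorentzian inner product on Minkowski 4-space `M^{3,1}`. -/
noncomputable def lprod (x y : Fin 4 → ℝ) : ℝ :=
  -(x 0 * y 0) + x 1 * y 1 + x 2 * y 2 + x 3 * y 3

/-- The hyperboloid model of hyperbolic 3-space. -/
def Hyp3 : Set (Fin 4 → ℝ) := {x | lprod x x = -1 ∧ 0 < x 0}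

/-- The inverse hyperbolic cosine. -/
noncomputable def arcosh (x : ℝ) : ℝ := Real.log (x + Real.sqrt (x ^ 2 - 1))

/-- Hyperbolic distance in the hyperboloid model: `cosh d(u,v) = −⟨u,v⟩`. -/
noncomputable def hypDist (u v : Fin 4 → ℝ) : ℝ := arcosh (-(lprod u v))

/-- Distance between two subsets of the hyperboloid model. -/
noncomputable def setHypDist (S T : Set (Fin 4 → ℝ)) : ℝ :=
  sInf {d : ℝ | ∃ p ∈ S, ∃ q ∈ T, d = hypDist p q}

lemma lpcomm (x y : Fin 4 → ℝ) : lprod x y = lprod y x := by simp only [lprod]; ring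

lemma lemP' (p z : Fin 4 → ℝ) (hp : lprod p p < 0) (hz : lprod z p = 0) : 0 ≤ lprod z z := by
  simp only [lprod] at *
  have h2 : z 0 * p 0 = z 1 * p 1 + z 2 * p 2 + z 3 * p 3 := by linarith
  have h3 : (z 0)^2 * (p 0)^2 = (z 1 * p 1 + z 2 * p 2 + z 3 * p 3)^2 := by
    rw [← h2]; ring
  nlinarith [h3, sq_nonneg (z 1 * p 2 - z 2 * p 1), sq_nonneg (z 1 * p 3 - z 3 * p 1),
    sq_nonneg (z 2 * p 3 - z 3 * p 2), sq_nonneg (z 1), sq_nonneg (z 2), sq_nonneg (z 3),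
    sq_nonneg (p 0)]

lemma lemRCS (x y : Fin 4 → ℝ) (hx : lprod x x < 0) :
    lprod x x * lprod y y ≤ (lprod x y)^2 := by
  have hzx : lprod (fun i => lprod x x * y i - lprod x y * x i) x = 0 := by
    simp only [lprod]; ring
  have hzz := lemP' x _ hx hzx
  have hexp : lprod (fun i => lprod x x * y i - lprod x y * x i)
      (fun i => lprod x x * y i - lprod x y * x i)
      = lprod x x * (lprod x x * lprod y y - (lprod x y)^2) := by
    simp only [lprod]; ring
  nlinarith [hzz, hexp, hx]

lemma lemCSp (p a b : Fin 4 → ℝ) (hp : lprod p p < 0)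
    (hap : lprod a p = 0) (hbp : lprod b p = 0) (hbb : 0 < lprod b b) :
    (lprod a b)^2 ≤ lprod a a * lprod b b := by
  have hzp : lprod (fun i => lprod b b * a i - lprod a b * b i) p = 0 := by
    have h : lprod (fun i => lprod b b * a i - lprod a b * b i) p
        = lprod b b * lprod a p - lprod a b * lprod b p := by
      simp only [lprod]; ring
    rw [h, hap, hbp]; ring
  have hzz := lemP' p _ hp hzp
  have hexp : lprod (fun i => lprod b b * a i - lprod a b * b i)
      (fun i => lprod b b * a i - lprod a b * b i)
      = lprod b b * (lprod a a * lprod b b - (lprod a b)^2) := by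
    simp only [lprod]; ring
  nlinarith [hzz, hexp, hbb]

lemma lemT' (u x : Fin 4 → ℝ) (hu : lprod u u = 0) (hu0 : 0 < u 0)
    (hx : lprod x x < 0) (hxu : lprod x u < 0) : 0 < x 0 := by
  simp only [lprod] at *
  by_contra h
  push_neg at h
  nlinarith [sq_nonneg (x 1 * u 2 - x 2 * u 1), sq_nonneg (x 1 * u 3 - x 3 * u 1),
    sq_nonneg (x 2 * u 3 - x 3 * u 2), sq_nonneg (x 0 * u 0 + x 1 * u 1 + x 2 * u 2 + x 3 * u 3),
    mul_nonneg (neg_nonneg.2 h) hu0.le]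

lemma lemSign (x y : Fin 4 → ℝ) (hx : lprod x x < 0) (hy : lprod y y < 0)
    (hx0 : 0 < x 0) (hy0 : 0 < y 0) : lprod x y < 0 := by
  simp only [lprod] at *
  nlinarith [sq_nonneg (x 1 * y 2 - x 2 * y 1), sq_nonneg (x 1 * y 3 - x 3 * y 1),
    sq_nonneg (x 2 * y 3 - x 3 * y 2), mul_pos hx0 hy0,
    sq_nonneg (x 1 * y 1 + x 2 * y 2 + x 3 * y 3),
    mul_pos (mul_pos hx0 hy0) (mul_pos hx0 hy0)]

lemma lemT (x y : Fin 4 → ℝ) (hx : lprod x x < 0) (hy : lprod y y < 0)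
    (hx0 : 0 < x 0) (hxy : lprod x y < 0) : 0 < y 0 := by
  by_contra h
  push_neg at h
  have hyne : y 0 ≠ 0 := by
    intro h0
    simp only [lprod] at hy
    rw [h0] at hy
    nlinarith [sq_nonneg (y 1), sq_nonneg (y 2), sq_nonneg (y 3)]
  have hy0 : y 0 < 0 := lt_of_le_of_ne h hyne
  have hyy' : lprod (fun i => -(y i)) (fun i => -(y i)) < 0 := by
    have h2 : lprod (fun i => -(y i)) (fun i => -(y i)) = lprod y y := by
      simp only [lprod]; ring
    rw [h2]; exact hy
  have hy0' : 0 < (fun i => -(y i)) 0 := by simpa using hy0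
  have hs := lemSign x (fun i => -(y i)) hx hyy' hx0 hy0'
  have hxy' : lprod x (fun i => -(y i)) = -(lprod x y) := by simp only [lprod]; ring
  rw [hxy'] at hs
  linarith

lemma arcosh_mono {a b : ℝ} (ha : 1 ≤ a) (hab : a ≤ b) : arcosh a ≤ arcosh b := by
  unfold arcosh
  have h1 : 0 < a + Real.sqrt (a^2 - 1) := by
    have := Real.sqrt_nonneg (a^2 - 1); linarith
  apply Real.log_le_log h1
  have h2 : Real.sqrt (a^2-1) ≤ Real.sqrt (b^2-1) := by
    apply Real.sqrt_le_sqrt; nlinarith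
  linarith

set_option maxHeartbeats 1000000 in
lemma mainLB (u w p q : Fin 4 → ℝ) (c : ℝ) (hcw : lprod u w = -c)
    (hu : lprod u u = 0) (hw : lprod w w = 1) (hc1 : 1 < c)
    (hpp : lprod p p = -1) (hp0 : 0 < p 0) (hpu : lprod p u = -1) (hpw : lprod p w < 0)
    (hqq : lprod q q = -1) (hq0 : 0 < q 0) (hqw : lprod q w = 0) :
    (c^2+1)/(2*c) ≤ -(lprod p q) := by
  have hcpos : 0 < c := by linarith
  obtain ⟨m, hm⟩ : ∃ m, lprod p w = m := ⟨_, rfl⟩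
  rw [hm] at hpw
  have hup : lprod u p = -1 := by rw [lpcomm]; exact hpu
  have hwp : lprod w p = m := by rw [lpcomm]; exact hm
  -- Step 1: c^2 + 2*c*m ≤ 1
  have haa : lprod (fun i => u i - p i) (fun i => u i - p i) = 1 := by
    have h : lprod (fun i => u i - p i) (fun i => u i - p i)
        = lprod u u - lprod u p - lprod p u + lprod p p := by simp only [lprod]; ring
    rw [h, hu, hup, hpu, hpp]; ring
  have hap : lprod (fun i => u i - p i) p = 0 := by
    have h : lprod (fun i => u i - p i) p = lprod u p - lprod p p := by simp only [lprod]; ring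
    rw [h, hup, hpp]; ring
  have hbp : lprod (fun i => w i + m * p i) p = 0 := by
    have h : lprod (fun i => w i + m * p i) p = lprod w p + m * lprod p p := by
      simp only [lprod]; ring
    rw [h, hwp, hpp]; ring
  have hbb : lprod (fun i => w i + m * p i) (fun i => w i + m * p i) = 1 + m^2 := by
    have h : lprod (fun i => w i + m * p i) (fun i => w i + m * p i)
        = lprod w w + m * lprod w p + m * lprod p w + m^2 * lprod p p := by
      simp only [lprod]; ring
    rw [h, hw, hwp, hm, hpp]; ring
  have hab : lprod (fun i => u i - p i) (fun i => w i + m * p i) = -c - m := by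
    have h : lprod (fun i => u i - p i) (fun i => w i + m * p i)
        = lprod u w + m * lprod u p - lprod p w - m * lprod p p := by
      simp only [lprod]; ring
    rw [h, hcw, hup, hm, hpp]; ring
  have hcs := lemCSp p (fun i => u i - p i) (fun i => w i + m * p i)
    (by rw [hpp]; norm_num) hap hbp (by rw [hbb]; positivity)
  rw [haa, hbb, hab] at hcs
  have hstep1 : c^2 + 2*c*m ≤ 1 := by nlinarith [hcs]
  -- Step 2
  have ha2a2 : lprod (fun i => p i + (-m) * w i) (fun i => p i + (-m) * w i) = -(1 + m^2) := by
    have h : lprod (fun i => p i + (-m) * w i) (fun i => p i + (-m) * w i)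
        = lprod p p + (-m) * lprod p w + (-m) * lprod w p + m^2 * lprod w w := by
      simp only [lprod]; ring
    rw [h, hpp, hm, hwp, hw]; ring
  have hpa2 : lprod p (fun i => p i + (-m) * w i) = -(1 + m^2) := by
    have h : lprod p (fun i => p i + (-m) * w i) = lprod p p + (-m) * lprod p w := by
      simp only [lprod]; ring
    rw [h, hpp, hm]; ring
  have ha20 : 0 < (fun i => p i + (-m) * w i) 0 :=
    lemT p (fun i => p i + (-m) * w i) (by rw [hpp]; norm_num)
      (by rw [ha2a2]; nlinarith [sq_nonneg m]) hp0 (by rw [hpa2]; nlinarith [sq_nonneg m])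
  have hsign : lprod (fun i => p i + (-m) * w i) q < 0 :=
    lemSign _ q (by rw [ha2a2]; nlinarith [sq_nonneg m]) (by rw [hqq]; norm_num) ha20 hq0
  have hrcs := lemRCS (fun i => p i + (-m) * w i) q (by rw [ha2a2]; nlinarith [sq_nonneg m])
  rw [ha2a2, hqq] at hrcs
  have hwq : lprod w q = 0 := by rw [lpcomm]; exact hqw
  have ha2q : lprod (fun i => p i + (-m) * w i) q = lprod p q := by
    have h : lprod (fun i => p i + (-m) * w i) q = lprod p q + (-m) * lprod w q := by
      simp only [lprod]; ring
    rw [h, hwq]; ring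
  rw [ha2q] at hrcs hsign
  -- combine
  have hsq : 1 + m^2 ≤ (lprod p q)^2 := by nlinarith [hrcs]
  have h2cs : c^2 - 1 ≤ 2*c*(-m) := by nlinarith [hstep1]
  rw [div_le_iff₀ (by linarith : (0:ℝ) < 2*c)]
  have hc21 : 0 ≤ c^2 - 1 := by nlinarith
  have hsq2 : (c^2-1)^2 ≤ (2*c*(-m))^2 := by
    nlinarith [mul_nonneg (by linarith : (0:ℝ) ≤ 2*c*(-m) - (c^2-1))
      (by linarith : (0:ℝ) ≤ 2*c*(-m) + (c^2-1))]
  have h4 : (c^2+1)^2 ≤ (2*c*(-(lprod p q)))^2 := by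
    nlinarith [mul_le_mul_of_nonneg_left hsq (by positivity : (0:ℝ) ≤ 4*c^2), hsq2]
  nlinarith [h4, hsign, hcpos, mul_pos hcpos (neg_pos.2 hsign)]

/-- Let `O` be the horosphere dual to `u ∈ L³₊` and `H` a totally geodesic plane disjoint
from `O`, with `w` the unit space-like dual vector of the half-space bounded by `H`
containing `O`.  Then `exp d(O, H) = −⟨u, w⟩`. -/
lemma quadPos (g L A t : ℝ) (hA : 0 < A) (hg : g < 0) (ht1 : 1 ≤ t)
    (hAt : A * t = 1 - g + |L| + A) : 0 ≤ g + t * L + A * t^2 := by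
  have hAt2 : A * t^2 = (1 - g + |L| + A) * t := by rw [pow_two, ← mul_assoc, hAt]
  have key : g + t * L + A * t^2 = g + (L + |L|) * t + (1 - g) * t + A * t := by
    rw [hAt2]; ring
  rw [key]
  have h1 : 0 ≤ (L + |L|) * t := mul_nonneg (by linarith [neg_abs_le L]) (by linarith)
  have h2 : (1 - g) * 1 ≤ (1 - g) * t := mul_le_mul_of_nonneg_left ht1 (by linarith)
  have h3 : A * 1 ≤ A * t := mul_le_mul_of_nonneg_left ht1 hA.le
  nlinarith [h1, h2, h3]

set_option maxHeartbeats 4000000 in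
theorem exp_dist_horosphere_plane (u w : Fin 4 → ℝ)
    (hu : lprod u u = 0) (hu0 : 0 < u 0) (hw : lprod w w = 1)
    (O H : Set (Fin 4 → ℝ))
    (hO : O = {v ∈ Hyp3 | lprod v u = -1})
    (hH : H = {v ∈ Hyp3 | lprod v w = 0})
    (hdisj : O ∩ H = ∅)
    (hside : ∀ v ∈ O, lprod v w < 0) :
    Real.exp (setHypDist O H) = -(lprod u w) := by
  obtain ⟨c, hcw⟩ : ∃ c, lprod u w = -c := ⟨-(lprod u w), by ring⟩
  have hwu : lprod w u = -c := by rw [lpcomm]; exact hcw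
  have hucoord : -(u 0 * u 0) + u 1 * u 1 + u 2 * u 2 + u 3 * u 3 = 0 := hu
  -- base point p₀ on the horosphere
  obtain ⟨e, he_def⟩ : ∃ e : ℝ, e = 1/(2*(u 0)^2) := ⟨_, rfl⟩
  have he : e * (2*(u 0)^2) = 1 := by rw [he_def]; field_simp
  have he0 : 0 < e := by rw [he_def]; positivity
  obtain ⟨p₀, hp₀def⟩ : ∃ p₀ : Fin 4 → ℝ,
      p₀ = fun i => u i / 2 + (if i = 0 then u i else -(u i)) * e := ⟨_, rfl⟩
  have hP0 : p₀ 0 = u 0 / 2 + u 0 * e := by simp [hp₀def]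
  have hP1 : p₀ 1 = u 1 / 2 - u 1 * e := by simp [hp₀def]; ring
  have hP2 : p₀ 2 = u 2 / 2 - u 2 * e := by simp [hp₀def]; ring
  have hP3 : p₀ 3 = u 3 / 2 - u 3 * e := by simp [hp₀def]; ring
  have hpp : lprod p₀ p₀ = -1 := by
    simp only [lprod, hP0, hP1, hP2, hP3]
    linear_combination (1/4 + e^2 - e) * hucoord - he
  have hpu : lprod p₀ u = -1 := by
    simp only [lprod, hP0, hP1, hP2, hP3]
    linear_combination (1/2 - e) * hucoord - he
  have hp0pos : 0 < p₀ 0 := by rw [hP0]; positivity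
  have hp₀O : p₀ ∈ O := by rw [hO]; exact ⟨⟨hpp, hp0pos⟩, hpu⟩
  have hg : lprod p₀ w < 0 := hside p₀ hp₀O
  -- c > 1
  have hc1 : 1 < c := by
    rcases lt_trichotomy c 0 with hcneg | hc0 | hcpos
    · -- c < 0: the horosphere escapes to the positive side of the plane
      exfalso
      obtain ⟨b, hbu, hbp, hbb⟩ : ∃ b : Fin 4 → ℝ,
          lprod b u = 0 ∧ lprod b p₀ = 0 ∧ 0 < lprod b b := by
        by_cases h23 : u 2 = 0 ∧ u 3 = 0
        · refine ⟨fun i => if i = 2 then u 1 else 0, ?_, ?_, ?_⟩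
          · simp [lprod, h23.1]
          · have h : lprod (fun i => if i = 2 then u 1 else 0) p₀ = u 1 * p₀ 2 := by
              simp [lprod]
            rw [h, hP2, h23.1]; ring
          · have h : lprod (fun i => if i = 2 then u 1 else 0)
                (fun i => if i = 2 then u 1 else 0) = u 1 * u 1 := by simp [lprod]
            rw [h]
            have h2 : u 2 * u 2 = 0 := by rw [h23.1]; ring
            have h3 : u 3 * u 3 = 0 := by rw [h23.2]; ring
            linarith [hucoord, mul_pos hu0 hu0, h2, h3]
        · refine ⟨fun i => if i = 2 then u 3 else if i = 3 then -(u 2) else 0, ?_, ?_, ?_⟩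
          · simp [lprod]; try ring
          · have h : lprod (fun i => if i = 2 then u 3 else if i = 3 then -(u 2) else 0) p₀
                = u 3 * p₀ 2 - u 2 * p₀ 3 := by simp [lprod]; try ring
            rw [h, hP2, hP3]; ring
          · have h : lprod (fun i => if i = 2 then u 3 else if i = 3 then -(u 2) else 0)
                (fun i => if i = 2 then u 3 else if i = 3 then -(u 2) else 0)
                = u 3 * u 3 + u 2 * u 2 := by simp [lprod]; try ring
            rw [h]
            rcases not_and_or.1 h23 with h2 | h3
            · linarith [mul_self_pos.2 h2, mul_self_nonneg (u 3)]
            · linarith [mul_self_pos.2 h3, mul_self_nonneg (u 2)]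
      obtain ⟨L, hL⟩ : ∃ L, lprod b w = L := ⟨_, rfl⟩
      obtain ⟨g, hgdef⟩ : ∃ g, lprod p₀ w = g := ⟨_, rfl⟩
      rw [hgdef] at hg
      obtain ⟨β, hβ⟩ : ∃ β, lprod b b = β := ⟨_, rfl⟩
      rw [hβ] at hbb
      obtain ⟨A, hA_def⟩ : ∃ A : ℝ, A = β * (-c) / 2 := ⟨_, rfl⟩
      have hA : 0 < A := by
        rw [hA_def]; exact div_pos (mul_pos hbb (by linarith)) two_pos
      obtain ⟨t, ht_def⟩ : ∃ t : ℝ, t = (1 - g + |L| + A) / A := ⟨_, rfl⟩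
      have ht1 : 1 ≤ t := by
        rw [ht_def, le_div_iff₀ hA]
        have := abs_nonneg L
        linarith
      have hAt : A * t = 1 - g + |L| + A := by
        rw [ht_def]; field_simp
      have hbp' : lprod p₀ b = 0 := by rw [lpcomm]; exact hbp
      have hvv : lprod (fun i => p₀ i + t * b i + (t^2*β/2) * u i)
          (fun i => p₀ i + t * b i + (t^2*β/2) * u i) = -1 := by
        have h : lprod (fun i => p₀ i + t * b i + (t^2*β/2) * u i)
            (fun i => p₀ i + t * b i + (t^2*β/2) * u i)
            = lprod p₀ p₀ + t^2 * lprod b b + (t^2*β/2)^2 * lprod u u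
              + 2*t*lprod p₀ b + 2*(t^2*β/2)*lprod p₀ u + 2*t*(t^2*β/2)*lprod b u := by
          simp only [lprod]; ring
        rw [h, hpp, hβ, hu, hbp', hpu, hbu]; ring
      have hvu : lprod (fun i => p₀ i + t * b i + (t^2*β/2) * u i) u = -1 := by
        have h : lprod (fun i => p₀ i + t * b i + (t^2*β/2) * u i) u
            = lprod p₀ u + t * lprod b u + (t^2*β/2) * lprod u u := by
          simp only [lprod]; ring
        rw [h, hpu, hbu, hu]; ring
      have hv0 : 0 < (fun i => p₀ i + t * b i + (t^2*β/2) * u i) 0 :=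
        lemT' u _ hu hu0 (by rw [hvv]; norm_num) (by rw [hvu]; norm_num)
      have hvO : (fun i => p₀ i + t * b i + (t^2*β/2) * u i) ∈ O := by
        rw [hO]; exact ⟨⟨hvv, hv0⟩, hvu⟩
      have hvw := hside _ hvO
      have hvwval : lprod (fun i => p₀ i + t * b i + (t^2*β/2) * u i) w
          = g + t * L + A * t^2 := by
        have h : lprod (fun i => p₀ i + t * b i + (t^2*β/2) * u i) w
            = lprod p₀ w + t * lprod b w + (t^2*β/2) * lprod u w := by
          simp only [lprod]; ring
        rw [h, hgdef, hL, hcw, hA_def]; ring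
      rw [hvwval] at hvw
      exact absurd hvw (not_lt.2 (quadPos g L A t hA hg ht1 hAt))
    · -- c = 0
      exfalso
      obtain ⟨g, hgdef⟩ : ∃ g, lprod p₀ w = g := ⟨_, rfl⟩
      rw [hgdef] at hg
      have hwu0 : lprod w u = 0 := by rw [hwu, hc0]; ring
      have huw0 : lprod u w = 0 := by rw [hcw, hc0]; ring
      have hvv : lprod (fun i => p₀ i + (-g) * w i + ((-g)*g + (-g)^2/2) * u i)
          (fun i => p₀ i + (-g) * w i + ((-g)*g + (-g)^2/2) * u i) = -1 := by
        have h : lprod (fun i => p₀ i + (-g) * w i + ((-g)*g + (-g)^2/2) * u i)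
            (fun i => p₀ i + (-g) * w i + ((-g)*g + (-g)^2/2) * u i)
            = lprod p₀ p₀ + (-g)^2 * lprod w w + ((-g)*g + (-g)^2/2)^2 * lprod u u
              + 2*(-g)*lprod p₀ w + 2*((-g)*g + (-g)^2/2)*lprod p₀ u
              + 2*(-g)*((-g)*g + (-g)^2/2)*lprod w u := by
          simp only [lprod]; ring
        rw [h, hpp, hw, hu, hgdef, hpu, hwu0]; ring
      have hvu : lprod (fun i => p₀ i + (-g) * w i + ((-g)*g + (-g)^2/2) * u i) u = -1 := by
        have h : lprod (fun i => p₀ i + (-g) * w i + ((-g)*g + (-g)^2/2) * u i) u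
            = lprod p₀ u + (-g) * lprod w u + ((-g)*g + (-g)^2/2) * lprod u u := by
          simp only [lprod]; ring
        rw [h, hpu, hwu0, hu]; ring
      have hv0 : 0 < (fun i => p₀ i + (-g) * w i + ((-g)*g + (-g)^2/2) * u i) 0 :=
        lemT' u _ hu hu0 (by rw [hvv]; norm_num) (by rw [hvu]; norm_num)
      have hvO : (fun i => p₀ i + (-g) * w i + ((-g)*g + (-g)^2/2) * u i) ∈ O := by
        rw [hO]; exact ⟨⟨hvv, hv0⟩, hvu⟩
      have hvw := hside _ hvO
      have hvwval : lprod (fun i => p₀ i + (-g) * w i + ((-g)*g + (-g)^2/2) * u i) w = 0 := by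
        have h : lprod (fun i => p₀ i + (-g) * w i + ((-g)*g + (-g)^2/2) * u i) w
            = lprod p₀ w + (-g) * lprod w w + ((-g)*g + (-g)^2/2) * lprod u w := by
          simp only [lprod]; ring
        rw [h, hgdef, hw, huw0]; ring
      rw [hvwval] at hvw
      exact lt_irrefl 0 hvw
    · -- c > 0 : the minimum of ⟨·,w⟩ on O forces c > 1
      by_contra hc1'
      push_neg at hc1'
      have hcne : c ≠ 0 := ne_of_gt hcpos
      have hps : lprod (fun i => ((c^2+1)/(2*c^2)) * u i + (1/c) * w i)
          (fun i => ((c^2+1)/(2*c^2)) * u i + (1/c) * w i) = -1 := by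
        have h : lprod (fun i => ((c^2+1)/(2*c^2)) * u i + (1/c) * w i)
            (fun i => ((c^2+1)/(2*c^2)) * u i + (1/c) * w i)
            = ((c^2+1)/(2*c^2))^2 * lprod u u + ((c^2+1)/(2*c^2))*(1/c)*lprod u w
              + ((c^2+1)/(2*c^2))*(1/c)*lprod w u + (1/c)^2 * lprod w w := by
          simp only [lprod]; ring
        rw [h, hu, hcw, hwu, hw]
        field_simp
        ring
      have hpsu : lprod (fun i => ((c^2+1)/(2*c^2)) * u i + (1/c) * w i) u = -1 := by
        have h : lprod (fun i => ((c^2+1)/(2*c^2)) * u i + (1/c) * w i) u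
            = ((c^2+1)/(2*c^2)) * lprod u u + (1/c) * lprod w u := by
          simp only [lprod]; ring
        rw [h, hu, hwu]
        field_simp
        ring
      have hps0 : 0 < (fun i => ((c^2+1)/(2*c^2)) * u i + (1/c) * w i) 0 :=
        lemT' u _ hu hu0 (by rw [hps]; norm_num) (by rw [hpsu]; norm_num)
      have hpsO : (fun i => ((c^2+1)/(2*c^2)) * u i + (1/c) * w i) ∈ O := by
        rw [hO]; exact ⟨⟨hps, hps0⟩, hpsu⟩
      have hpsw := hside _ hpsO
      have hpswval : lprod (fun i => ((c^2+1)/(2*c^2)) * u i + (1/c) * w i) w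
          = (1 - c^2)/(2*c) := by
        have h : lprod (fun i => ((c^2+1)/(2*c^2)) * u i + (1/c) * w i) w
            = ((c^2+1)/(2*c^2)) * lprod u w + (1/c) * lprod w w := by
          simp only [lprod]; ring
        rw [h, hcw, hw]
        field_simp
        ring
      rw [hpswval] at hpsw
      rw [div_lt_iff₀ (by linarith : (0:ℝ) < 2*c)] at hpsw
      have hix : c * c ≤ 1 * 1 := mul_le_mul hc1' hc1' hcpos.le zero_le_one
      linarith [hpsw, hix]
  -- now c > 1; construct the witnesses
  have hcpos : 0 < c := by linarith
  have hcne : c ≠ 0 := ne_of_gt hcpos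
  have hps : lprod (fun i => ((c^2+1)/(2*c^2)) * u i + (1/c) * w i)
      (fun i => ((c^2+1)/(2*c^2)) * u i + (1/c) * w i) = -1 := by
    have h : lprod (fun i => ((c^2+1)/(2*c^2)) * u i + (1/c) * w i)
        (fun i => ((c^2+1)/(2*c^2)) * u i + (1/c) * w i)
        = ((c^2+1)/(2*c^2))^2 * lprod u u + ((c^2+1)/(2*c^2))*(1/c)*lprod u w
          + ((c^2+1)/(2*c^2))*(1/c)*lprod w u + (1/c)^2 * lprod w w := by
      simp only [lprod]; ring
    rw [h, hu, hcw, hwu, hw]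
    field_simp
    ring
  have hpsu : lprod (fun i => ((c^2+1)/(2*c^2)) * u i + (1/c) * w i) u = -1 := by
    have h : lprod (fun i => ((c^2+1)/(2*c^2)) * u i + (1/c) * w i) u
        = ((c^2+1)/(2*c^2)) * lprod u u + (1/c) * lprod w u := by
      simp only [lprod]; ring
    rw [h, hu, hwu]
    field_simp
    ring
  have hps0 : 0 < (fun i => ((c^2+1)/(2*c^2)) * u i + (1/c) * w i) 0 :=
    lemT' u _ hu hu0 (by rw [hps]; norm_num) (by rw [hpsu]; norm_num)
  have hpsO : (fun i => ((c^2+1)/(2*c^2)) * u i + (1/c) * w i) ∈ O := by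
    rw [hO]; exact ⟨⟨hps, hps0⟩, hpsu⟩
  have hqq : lprod (fun i => (1/c) * u i + w i) (fun i => (1/c) * u i + w i) = -1 := by
    have h : lprod (fun i => (1/c) * u i + w i) (fun i => (1/c) * u i + w i)
        = (1/c)^2 * lprod u u + (1/c)*lprod u w + (1/c)*lprod w u + lprod w w := by
      simp only [lprod]; ring
    rw [h, hu, hcw, hwu, hw]
    field_simp
    ring
  have hqw : lprod (fun i => (1/c) * u i + w i) w = 0 := by
    have h : lprod (fun i => (1/c) * u i + w i) w = (1/c) * lprod u w + lprod w w := by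
      simp only [lprod]; ring
    rw [h, hcw, hw]
    field_simp
    ring
  have hqu : lprod (fun i => (1/c) * u i + w i) u = -c := by
    have h : lprod (fun i => (1/c) * u i + w i) u = (1/c) * lprod u u + lprod w u := by
      simp only [lprod]; ring
    rw [h, hu, hwu]; ring
  have hq0 : 0 < (fun i => (1/c) * u i + w i) 0 :=
    lemT' u _ hu hu0 (by rw [hqq]; norm_num) (by rw [hqu]; linarith)
  have hqH : (fun i => (1/c) * u i + w i) ∈ H := by
    rw [hH]; exact ⟨⟨hqq, hq0⟩, hqw⟩
  have hpsq : lprod (fun i => ((c^2+1)/(2*c^2)) * u i + (1/c) * w i)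
      (fun i => (1/c) * u i + w i) = -((c^2+1)/(2*c)) := by
    have h : lprod (fun i => ((c^2+1)/(2*c^2)) * u i + (1/c) * w i)
        (fun i => (1/c) * u i + w i)
        = ((c^2+1)/(2*c^2))*(1/c) * lprod u u + ((c^2+1)/(2*c^2)) * lprod u w
          + (1/c)*(1/c) * lprod w u + (1/c) * lprod w w := by
      simp only [lprod]; ring
    rw [h, hu, hcw, hwu, hw]
    field_simp
    ring
  have hK1 : 1 ≤ (c^2+1)/(2*c) := by
    rw [le_div_iff₀ (by linarith : (0:ℝ) < 2*c)]
    linarith [sq_nonneg (c-1)]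
  have hdEq : hypDist (fun i => ((c^2+1)/(2*c^2)) * u i + (1/c) * w i)
      (fun i => (1/c) * u i + w i) = arcosh ((c^2+1)/(2*c)) := by
    unfold hypDist
    rw [hpsq, neg_neg]
  have hlow : ∀ d ∈ {d : ℝ | ∃ p ∈ O, ∃ q ∈ H, d = hypDist p q},
      arcosh ((c^2+1)/(2*c)) ≤ d := by
    rintro d ⟨p, hpO, q, hqH', rfl⟩
    have hpw' : lprod p w < 0 := hside p hpO
    rw [hO] at hpO
    rw [hH] at hqH'
    simp only [Set.mem_sep_iff, Set.mem_setOf_eq, Hyp3] at hpO hqH'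
    obtain ⟨⟨hpp', hp0'⟩, hpu'⟩ := hpO
    obtain ⟨⟨hqq', hq0'⟩, hqw'⟩ := hqH'
    exact arcosh_mono hK1 (mainLB u w p q c hcw hu hw hc1 hpp' hp0' hpu' hpw' hqq' hq0' hqw')
  have hInf : setHypDist O H = arcosh ((c^2+1)/(2*c)) := by
    unfold setHypDist
    apply le_antisymm
    · exact csInf_le ⟨arcosh ((c^2+1)/(2*c)), fun d hd => hlow d hd⟩
        ⟨_, hpsO, _, hqH, hdEq.symm⟩
    · exact le_csInf ⟨_, ⟨_, hpsO, _, hqH, rfl⟩⟩ hlow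
  rw [hInf]
  unfold arcosh
  have hKs : Real.sqrt (((c^2+1)/(2*c))^2 - 1) = (c^2-1)/(2*c) := by
    have h1 : ((c^2+1)/(2*c))^2 - 1 = ((c^2-1)/(2*c))^2 := by
      field_simp
      ring
    rw [h1, Real.sqrt_sq (div_nonneg (by linarith [sq_nonneg (c-1)]) (by linarith))]
  have hexplog : (0:ℝ) < (c^2+1)/(2*c) + (c^2-1)/(2*c) := by
    have h1 : (0:ℝ) < (c^2+1)/(2*c) := by positivity
    have h2 : (0:ℝ) ≤ (c^2-1)/(2*c) :=
      div_nonneg (by linarith [sq_nonneg (c-1)]) (by linarith)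
    linarith
  rw [hKs, Real.exp_log hexplog]
  rw [hcw]
  field_simp
  ring
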